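/- For every integer p ≥ 2 and every real α ∈ (0,1), there exists a unique y* ∈ (0,1) such that 1 − (1 − y*)^p = p^α · y*; moreover, for every y ∈ (0,1], the inequality 1 − (1 − y)^p > p^α · y holds if y < y*, and 1 − (1 − y)^p < p^α · y holds if y* < y ≤ 1. -/

import Mathlib

open Set

theorem benefit_crossing_point
    (p : ℕ) (hp : 2 ≤ p) (α : ℝ) (hα : α ∈ Set.Ioo (0 : ℝ) 1) :
    ∃ ystar ∈ Set.Ioo (0 : ℝ) 1,
      (1 - (1 - ystar) ^ p = (p : ℝ) ^ α * ystar) ∧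
      (∀ y ∈ Set.Ioo (0 : ℝ) 1, 1 - (1 - y) ^ p = (p : ℝ) ^ α * y → y = ystar) ∧
      (∀ y ∈ Set.Ioc (0 : ℝ) 1,
        (y < ystar → 1 - (1 - y) ^ p > (p : ℝ) ^ α * y) ∧
        (ystar < y → 1 - (1 - y) ^ p < (p : ℝ) ^ α * y)) := by
  obtain ⟨hα0, hα1⟩ := hα
  set c : ℝ := (p : ℝ) ^ α with hc
  have hp1 : (1 : ℝ) < p := by exact_mod_cast lt_of_lt_of_le one_lt_two hp
  have hc1 : 1 < c := (Real.one_lt_rpow_iff_of_pos (by linarith)).mpr (Or.inl ⟨hp1, hα0⟩)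
  have hcp : c < p := by
    calc c < (p : ℝ) ^ (1 : ℝ) := by
          exact (Real.rpow_lt_rpow_left_iff hp1).mpr hα1
      _ = p := Real.rpow_one _
  set g : ℝ → ℝ := fun y => 1 - (1 - y) ^ p - c * y with hg
  have hconv : StrictConvexOn ℝ (Icc (0:ℝ) 1) (fun y => (1 - y) ^ p) := by
    refine ⟨convex_Icc _ _, fun x hx y hy hxy a b ha hb hab => ?_⟩
    have h1x : (1 : ℝ) - x ∈ Ici (0:ℝ) := by simp [mem_Icc] at hx ⊢; linarith [hx.2]
    have h1y : (1 : ℝ) - y ∈ Ici (0:ℝ) := by simp [mem_Icc] at hy ⊢; linarith [hy.2]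
    have hne : (1 : ℝ) - x ≠ 1 - y := fun h => hxy (by linarith)
    have := (strictConvexOn_pow hp).2 h1x h1y hne ha hb hab
    have hz : a • ((1:ℝ) - x) + b • (1 - y) = 1 - (a • x + b • y) := by
      simp only [smul_eq_mul]; ring_nf; linarith [hab]
    rw [hz] at this
    simpa using this
  have hconc : StrictConcaveOn ℝ (Icc (0:ℝ) 1) g := by
    refine ⟨convex_Icc _ _, fun x hx y hy hxy a b ha hb hab => ?_⟩
    have := hconv.2 hx hy hxy ha hb hab
    simp only [smul_eq_mul, hg] at this ⊢
    nlinarith [this]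
  have hgc : Continuous g := by fun_prop
  have hg0 : g 0 = 0 := by simp [hg]
  have hg1 : g 1 < 0 := by
    simp [hg, zero_pow (by omega : p ≠ 0)]; linarith
  -- find ε ∈ (0,1) with g ε > 0
  have hd : HasDerivAt g ((p : ℝ) - c) 0 := by
    have h1 : HasDerivAt (fun y : ℝ => (1 - y) ^ p) (-(p : ℝ)) 0 := by
      have := ((hasDerivAt_id (0:ℝ)).const_sub 1).pow p
      simpa [Pi.pow_def] using this
    have := ((hasDerivAt_const (0:ℝ) (1:ℝ)).sub h1).sub ((hasDerivAt_id (0:ℝ)).const_mul c)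
    simpa [hg, Pi.sub_def] using this
  have hslope : Filter.Tendsto (slope g 0) (nhdsWithin 0 (Ioi 0)) (nhds ((p:ℝ) - c)) :=
    (hasDerivWithinAt_iff_tendsto_slope' (by simp : (0:ℝ) ∉ Ioi 0)).1 hd.hasDerivWithinAt
  obtain ⟨ε, hεIoo, hεpos⟩ : ∃ ε ∈ Ioo (0:ℝ) 1, 0 < slope g 0 ε := by
    have h1 : ∀ᶠ y in nhdsWithin (0:ℝ) (Ioi 0), 0 < slope g 0 y :=
      hslope.eventually (eventually_gt_nhds (by linarith))
    have h2 : Ioo (0:ℝ) 1 ∈ nhdsWithin (0:ℝ) (Ioi 0) :=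
      Ioo_mem_nhdsGT_of_mem (by constructor <;> norm_num)
    obtain ⟨y, hy1, hy2⟩ := (h1.and (Filter.eventually_of_mem h2 (fun _ h => h))).exists
    exact ⟨y, hy2, hy1⟩
  have hgε : 0 < g ε := by
    have : slope g 0 ε = g ε / ε := by simp [slope, hg0, div_eq_inv_mul]
    rw [this] at hεpos
    exact (div_pos_iff.1 hεpos).resolve_right (fun h => absurd hεIoo.1 (not_lt.2 h.2.le)) |>.1
  -- IVT
  obtain ⟨ystar, hys, hgys⟩ : ∃ ystar ∈ Ioo ε 1, g ystar = 0 := by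
    have := intermediate_value_Ioo' hεIoo.2.le hgc.continuousOn (a := ε) (b := 1)
    obtain ⟨x, hx, hgx⟩ := this ⟨hg1, hgε⟩
    exact ⟨x, hx, hgx⟩
  have hysIoo : ystar ∈ Ioo (0:ℝ) 1 := ⟨lt_trans hεIoo.1 hys.1, hys.2⟩
  -- sign claims via strict concavity
  have hlt : ∀ y : ℝ, 0 < y → y < ystar → 0 < g y := by
    intro y hy0 hyys
    have hb : 0 < y / ystar := div_pos hy0 hysIoo.1
    have hb1 : y / ystar < 1 := (div_lt_one hysIoo.1).2 hyys
    have := hconc.2 (Set.mem_Icc.2 ⟨le_refl 0, by norm_num⟩) (Set.mem_Icc.2 ⟨hysIoo.1.le, hysIoo.2.le⟩)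
      hysIoo.1.ne (show (0:ℝ) < 1 - y / ystar by linarith) hb
      (show (1 - y / ystar) + y / ystar = 1 by ring)
    have heq : (1 - y / ystar) • (0:ℝ) + (y / ystar) • ystar = y := by
      simp only [smul_eq_mul, mul_zero, zero_add]
      exact div_mul_cancel₀ _ hysIoo.1.ne'
    rw [heq, hg0, hgys] at this
    simpa using this
  have hgt : ∀ y : ℝ, ystar < y → y ≤ 1 → g y < 0 := by
    intro y hyys hy1
    have hy0 : 0 < y := lt_trans hysIoo.1 hyys
    have hb : 0 < ystar / y := div_pos hysIoo.1 hy0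
    have hb1 : ystar / y < 1 := (div_lt_one hy0).2 hyys
    have := hconc.2 (Set.mem_Icc.2 ⟨le_refl 0, by norm_num⟩) (Set.mem_Icc.2 ⟨hy0.le, hy1⟩)
      hy0.ne (show (0:ℝ) < 1 - ystar / y by linarith) hb
      (show (1 - ystar / y) + ystar / y = 1 by ring)
    have heq : (1 - ystar / y) • (0:ℝ) + (ystar / y) • y = ystar := by
      simp only [smul_eq_mul, mul_zero, zero_add]
      exact div_mul_cancel₀ _ hy0.ne'
    rw [heq, hg0, hgys] at this
    simp only [smul_eq_mul, mul_zero, zero_add] at this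
    by_contra hge
    push_neg at hge
    nlinarith [mul_nonneg hb.le hge]
  refine ⟨ystar, hysIoo, by have := hgys; simp only [hg] at this; linarith, ?_, ?_⟩
  · intro y hy heq
    by_contra hne
    rcases lt_or_gt_of_ne hne with h | h
    · have := hlt y hy.1 h
      simp only [hg] at this; linarith
    · have := hgt y h hy.2.le
      simp only [hg] at this; linarith
  · intro y hy
    constructor
    · intro h
      have := hlt y hy.1 h
      simp only [hg] at this; linarith
    · intro h
      have := hgt y h hy.2
      simp only [hg] at this; linarith
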